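/- Let P be a polyhedron in ℝⁿ, F a face of P, and G a nonempty face of F (so that G ⊆ F ⊆ P). Suppose q ∈ (F*)°|P and p ∈ (G*)°|F. Then there exists ε₀ > 0 such that for every ε with 0 < ε < ε₀, one has q + ε·p ∈ (G*)°|P. -/

import Mathlib

open scoped RealInnerProductSpace

noncomputable section

/-- A polyhedron in `ℝⁿ` is a finite intersection of closed half-spaces. -/
def IsPolyhedron {n : ℕ} (P : Set (EuclideanSpace ℝ (Fin n))) : Prop :=
  ∃ (N : ℕ) (q : Fin N → EuclideanSpace ℝ (Fin n)) (r : Fin N → ℝ),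
    P = {y | ∀ j, r j ≤ ⟪q j, y⟫}

/-- A subset `F ⊆ P` is a face of `P` if there are `q ∈ ℝⁿ` and `ρ ∈ ℝ` with
`⟨q, u⟩ = ρ` for every `u ∈ F` and `ρ < ⟨q, y⟩` for every `y ∈ P \ F`. -/
def IsFace {n : ℕ} (P F : Set (EuclideanSpace ℝ (Fin n))) : Prop :=
  F ⊆ P ∧ ∃ (q : EuclideanSpace ℝ (Fin n)) (ρ : ℝ),
    (∀ u ∈ F, ⟪q, u⟫ = ρ) ∧ ∀ y ∈ P \ F, ρ < ⟪q, y⟫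

/-- The interior `(F*)°|P` of the cone of `F` relative to the ambient set `P`. -/
def coneInterior {n : ℕ} (P F : Set (EuclideanSpace ℝ (Fin n))) :
    Set (EuclideanSpace ℝ (Fin n)) :=
  {q | q ≠ 0 ∧ ∃ ρ : ℝ, (∀ u ∈ F, ⟪q, u⟫ = ρ) ∧ ∀ y ∈ P \ F, ρ < ⟪q, y⟫}

open Finset in
private theorem exchange {m M : ℕ} (a : EuclideanSpace ℝ (Fin m)) (v : Fin M → EuclideanSpace ℝ (Fin m)) :
    ∀ (k : ℕ) (c : Fin M → ℝ), (∀ i, 0 ≤ c i) →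
    ((Finset.univ.filter (fun i => c i ≠ 0 ∧ ⟪a, v i⟫ ≠ 0)).card ≤ k) →
    0 ≤ ⟪a, ∑ i, c i • v i⟫ →
    ∃ (c' : Fin M → ℝ) (d : Fin M × Fin M → ℝ),
      (∀ i, 0 ≤ c' i) ∧ (∀ ij, 0 ≤ d ij) ∧
      (∀ i, c' i ≠ 0 → 0 ≤ ⟪a, v i⟫) ∧
      (∀ ij, d ij ≠ 0 → 0 < ⟪a, v ij.1⟫ ∧ ⟪a, v ij.2⟫ < 0) ∧
      ∑ i, c i • v i = ∑ i, c' i • v i +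
        ∑ ij : Fin M × Fin M, d ij • (⟪a, v ij.1⟫ • v ij.2 - ⟪a, v ij.2⟫ • v ij.1) := by
  intro k
  induction k with
  | zero =>
    intro c hc hcard _
    refine ⟨c, 0, hc, fun _ => le_rfl, ?_, by simp, by simp⟩
    intro i hi
    by_contra hneg
    have hmem : i ∈ Finset.univ.filter (fun i => c i ≠ 0 ∧ ⟪a, v i⟫ ≠ 0) :=
      Finset.mem_filter.mpr ⟨Finset.mem_univ _, hi, fun h => hneg h.ge⟩
    have := Finset.card_pos.mpr ⟨i, hmem⟩
    omega
  | succ k ih =>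
    intro c hc hcard hz
    by_cases hdone : ∀ i, c i ≠ 0 → 0 ≤ ⟪a, v i⟫
    · exact ⟨c, 0, hc, fun _ => le_rfl, hdone, by simp, by simp⟩
    push_neg at hdone
    obtain ⟨j, hcj, hbj⟩ := hdone
    have hcjpos : 0 < c j := lt_of_le_of_ne (hc j) (Ne.symm hcj)
    have hinner : ⟪a, ∑ i, c i • v i⟫ = ∑ i, c i * ⟪a, v i⟫ := by
      rw [inner_sum]; exact Finset.sum_congr rfl fun l _ => real_inner_smul_right _ _ _
    have hex : ∃ i, c i ≠ 0 ∧ 0 < ⟪a, v i⟫ := by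
      by_contra hno
      push_neg at hno
      have hlt : ∑ i, c i * ⟪a, v i⟫ < ∑ _i : Fin M, (0:ℝ) := by
        apply Finset.sum_lt_sum
        · intro l _
          by_cases hl : c l = 0
          · simp [hl]
          · exact mul_nonpos_of_nonneg_of_nonpos (hc l) (hno l hl)
        · exact ⟨j, Finset.mem_univ j, mul_neg_of_pos_of_neg hcjpos hbj⟩
      rw [Finset.sum_const_zero] at hlt
      rw [hinner] at hz
      linarith
    obtain ⟨i, hci, hai⟩ := hex
    have hcipos : 0 < c i := lt_of_le_of_ne (hc i) (Ne.symm hci)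
    have hij : i ≠ j := by rintro rfl; linarith
    have hnegβ : 0 < -⟪a, v j⟫ := by linarith
    set s := min (c j / ⟪a, v i⟫) (c i / (-⟪a, v j⟫)) with hs
    have hspos : 0 < s := lt_min (div_pos hcjpos hai) (div_pos hcipos hnegβ)
    set c₂ : Fin M → ℝ := fun l =>
      c l - (if l = i then s * (-⟪a, v j⟫) else 0) - (if l = j then s * ⟪a, v i⟫ else 0) with hc₂
    have hc₂i : c₂ i = c i - s * (-⟪a, v j⟫) := by simp [hc₂, hij]
    have hc₂j : c₂ j = c j - s * ⟪a, v i⟫ := by simp [hc₂, Ne.symm hij]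
    have hc₂other : ∀ l, l ≠ i → l ≠ j → c₂ l = c l := by
      intro l h1 h2; simp [hc₂, h1, h2]
    have hc₂nn : ∀ l, 0 ≤ c₂ l := by
      intro l
      by_cases hli : l = i
      · rw [hli, hc₂i]
        have : s * (-⟪a, v j⟫) ≤ c i := by
          rw [← le_div_iff₀ hnegβ]; exact min_le_right _ _
        linarith
      by_cases hlj : l = j
      · rw [hlj, hc₂j]
        have : s * ⟪a, v i⟫ ≤ c j := by
          rw [← le_div_iff₀ hai]; exact min_le_left _ _
        linarith
      · rw [hc₂other l hli hlj]; exact hc l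
    have hsum2 : ∑ l, c₂ l • v l =
        (∑ l, c l • v l) - s • (⟪a, v i⟫ • v j - ⟪a, v j⟫ • v i) := by
      simp only [hc₂, sub_smul, ite_smul, zero_smul, Finset.sum_sub_distrib,
        Finset.sum_ite_eq', Finset.mem_univ, if_true]
      module
    have haw : ⟪a, (⟪a, v i⟫ • v j - ⟪a, v j⟫ • v i : EuclideanSpace ℝ (Fin m))⟫ = 0 := by
      simp only [inner_sub_right, real_inner_smul_right]; ring
    have hz2 : 0 ≤ ⟪a, ∑ l, c₂ l • v l⟫ := by
      rw [hsum2, inner_sub_right, real_inner_smul_right, haw]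
      simpa using hz
    have hzero : c₂ i = 0 ∨ c₂ j = 0 := by
      rcases min_choice (c j / ⟪a, v i⟫) (c i / (-⟪a, v j⟫)) with h | h
      · right; rw [hc₂j, hs, h, div_mul_cancel₀ _ (ne_of_gt hai), sub_self]
      · left; rw [hc₂i, hs, h, div_mul_cancel₀ _ (ne_of_gt hnegβ), sub_self]
    obtain ⟨z0, hz0f, hz0⟩ : ∃ z0, (z0 ∈ Finset.univ.filter
        (fun l => c l ≠ 0 ∧ ⟪a, v l⟫ ≠ 0)) ∧ c₂ z0 = 0 := by
      rcases hzero with h | h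
      · exact ⟨i, Finset.mem_filter.mpr ⟨Finset.mem_univ _, hci, ne_of_gt hai⟩, h⟩
      · exact ⟨j, Finset.mem_filter.mpr ⟨Finset.mem_univ _, hcj, ne_of_lt hbj⟩, h⟩
    have hsubset : (Finset.univ.filter (fun l => c₂ l ≠ 0 ∧ ⟪a, v l⟫ ≠ 0)) ⊆
        (Finset.univ.filter (fun l => c l ≠ 0 ∧ ⟪a, v l⟫ ≠ 0)) := by
      intro l hl
      simp only [Finset.mem_filter, Finset.mem_univ, true_and] at hl ⊢
      refine ⟨?_, hl.2⟩
      by_cases hli : l = i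
      · rw [hli]; exact hci
      by_cases hlj : l = j
      · rw [hlj]; exact hcj
      · rw [← hc₂other l hli hlj]; exact hl.1
    have hcard2 : (Finset.univ.filter (fun l => c₂ l ≠ 0 ∧ ⟪a, v l⟫ ≠ 0)).card ≤ k := by
      have hss : (Finset.univ.filter (fun l => c₂ l ≠ 0 ∧ ⟪a, v l⟫ ≠ 0)) ⊂
          (Finset.univ.filter (fun l => c l ≠ 0 ∧ ⟪a, v l⟫ ≠ 0)) := by
        refine (Finset.ssubset_iff_of_subset hsubset).mpr ⟨z0, hz0f, ?_⟩
        intro hmem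
        exact (Finset.mem_filter.mp hmem).2.1 hz0
      have := Finset.card_lt_card hss
      omega
    obtain ⟨c', d, h1, h2, h3, h4, h5⟩ := ih c₂ hc₂nn hcard2 hz2
    refine ⟨c', fun ij => d ij + (if ij = (i, j) then s else 0), h1, ?_, h3, ?_, ?_⟩
    · intro ij
      by_cases h : ij = (i, j)
      · simp only [h, if_pos rfl]
        exact add_nonneg (h2 _) hspos.le
      · simp only [h, if_false, add_zero]
        exact h2 ij
    · intro ij hij'
      by_cases h : ij = (i, j)
      · rw [h]; exact ⟨hai, hbj⟩
      · simp only [h, if_false, add_zero] at hij'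
        exact h4 ij hij'
    · have hsplit : ∑ ij : Fin M × Fin M,
          (d ij + (if ij = (i, j) then s else 0)) • (⟪a, v ij.1⟫ • v ij.2 - ⟪a, v ij.2⟫ • v ij.1) =
          (∑ ij : Fin M × Fin M, d ij • (⟪a, v ij.1⟫ • v ij.2 - ⟪a, v ij.2⟫ • v ij.1)) +
            s • (⟪a, v i⟫ • v j - ⟪a, v j⟫ • v i) := by
        simp only [add_smul, ite_smul, zero_smul, Finset.sum_add_distrib,
          Finset.sum_ite_eq', Finset.mem_univ, if_true]
      rw [hsplit, ← add_assoc, ← h5, hsum2]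
      abel

open Finset in
private theorem weyl {m : ℕ} (N : ℕ) (a : Fin N → EuclideanSpace ℝ (Fin m)) :
    ∃ (M : ℕ) (v : Fin M → EuclideanSpace ℝ (Fin m)),
      (∀ i j, 0 ≤ ⟪a j, v i⟫) ∧
      ∀ z : EuclideanSpace ℝ (Fin m), (∀ j, 0 ≤ ⟪a j, z⟫) →
        ∃ c : Fin M → ℝ, (∀ i, 0 ≤ c i) ∧ z = ∑ i, c i • v i := by
  classical
  induction N with
  | zero =>
    refine ⟨m + m, fun k => Sum.elim (fun i => EuclideanSpace.single i (1:ℝ))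
      (fun i => -EuclideanSpace.single i (1:ℝ)) (finSumFinEquiv.symm k), fun i j => j.elim0, ?_⟩
    intro z _
    refine ⟨fun k => Sum.elim (fun i => max (z i) 0) (fun i => max (-z i) 0)
      (finSumFinEquiv.symm k), ?_, ?_⟩
    · intro k
      rcases hk : finSumFinEquiv.symm k with i | i <;> simp [hk, le_max_right]
    · have hcomp := Equiv.sum_comp (finSumFinEquiv.symm :
        Fin (m + m) ≃ Fin m ⊕ Fin m) (fun x => Sum.elim (fun i => max (z i) 0)
          (fun i => max (-z i) 0) x • Sum.elim (fun i => EuclideanSpace.single i (1:ℝ))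
          (fun i => -EuclideanSpace.single i (1:ℝ)) x)
      rw [hcomp, Fintype.sum_sum_type]
      simp only [Sum.elim_inl, Sum.elim_inr, smul_neg]
      have key : ∀ i : Fin m, max (z i) 0 • EuclideanSpace.single i (1:ℝ) -
          max (-z i) 0 • EuclideanSpace.single i (1:ℝ) = z i • EuclideanSpace.single i (1:ℝ) := by
        intro i
        rw [← sub_smul, max_zero_sub_max_neg_zero_eq_self]
      rw [← Finset.sum_add_distrib]
      simp only [← sub_eq_add_neg, key]
      have h := (EuclideanSpace.basisFun (Fin m) ℝ).sum_repr z
      simp only [EuclideanSpace.basisFun_apply, EuclideanSpace.basisFun_repr] at h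
      exact h.symm
  | succ N ihN =>
    obtain ⟨M, v, hv, hrep⟩ := ihN (fun j => a j.castSucc)
    set b := a (Fin.last N) with hb
    set V : Fin M ⊕ (Fin M × Fin M) → EuclideanSpace ℝ (Fin m) := Sum.elim
      (fun i => if 0 ≤ ⟪b, v i⟫ then v i else 0)
      (fun ij => if 0 < ⟪b, v ij.1⟫ ∧ ⟪b, v ij.2⟫ < 0 then
         ⟪b, v ij.1⟫ • v ij.2 - ⟪b, v ij.2⟫ • v ij.1 else 0) with hV
    set e : (Fin M ⊕ Fin M × Fin M) ≃ Fin (M + M * M) :=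
      (Equiv.sumCongr (Equiv.refl (Fin M)) finProdFinEquiv).trans finSumFinEquiv with he
    have key : ∀ x, ∀ j : Fin (N + 1), 0 ≤ ⟪a j, V x⟫ := by
      rintro (i | ij) j
      · simp only [hV, Sum.elim_inl]
        split_ifs with h
        · induction j using Fin.lastCases with
          | last => rw [← hb]; exact h
          | cast j' => exact hv i j'
        · simp
      · simp only [hV, Sum.elim_inr]
        split_ifs with h
        · induction j using Fin.lastCases with
          | last =>
            rw [← hb, inner_sub_right, real_inner_smul_right, real_inner_smul_right]
            ring_nf
            exact le_refl _
          | cast j' =>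
            rw [inner_sub_right, real_inner_smul_right, real_inner_smul_right]
            have h1 := hv ij.1 j'
            have h2 := hv ij.2 j'
            nlinarith [h.1, h.2]
        · simp
    refine ⟨M + M * M, fun k => V (e.symm k), fun k j => key _ j, ?_⟩
    intro z hz
    obtain ⟨c, hc, hcz⟩ := hrep z (fun j => hz j.castSucc)
    have hzb : 0 ≤ ⟪b, ∑ i, c i • v i⟫ := by rw [← hcz]; exact hz (Fin.last N)
    obtain ⟨c', d, h1, h2, h3, h4, h5⟩ := exchange b v
      ((Finset.univ.filter (fun i => c i ≠ 0 ∧ ⟪b, v i⟫ ≠ 0)).card) c hc le_rfl hzb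
    refine ⟨fun k => Sum.elim c' d (e.symm k), ?_, ?_⟩
    · intro k
      show 0 ≤ Sum.elim c' d (e.symm k)
      rcases e.symm k with i | ij
      · exact h1 i
      · exact h2 ij
    · have hcomp := Equiv.sum_comp (e.symm) (fun x => Sum.elim c' d x • V x)
      rw [hcomp, Fintype.sum_sum_type]
      simp only [Sum.elim_inl, Sum.elim_inr]
      have e1 : ∀ i : Fin M, c' i • V (Sum.inl i) = c' i • v i := by
        intro i
        by_cases h : c' i = 0
        · rw [h, zero_smul, zero_smul]
        · simp only [hV, Sum.elim_inl, if_pos (h3 i h)]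
      have e2 : ∀ ij : Fin M × Fin M, d ij • V (Sum.inr ij) =
          d ij • (⟪b, v ij.1⟫ • v ij.2 - ⟪b, v ij.2⟫ • v ij.1) := by
        intro ij
        by_cases h : d ij = 0
        · rw [h, zero_smul, zero_smul]
        · simp only [hV, Sum.elim_inr, if_pos (h4 ij h)]
      simp only [e1, e2]
      rw [← h5, ← hcz]

open Finset in
private noncomputable def snocE {n : ℕ} (y : EuclideanSpace ℝ (Fin n)) (t : ℝ) :
    EuclideanSpace ℝ (Fin (n+1)) := WithLp.toLp 2 (Fin.snoc (α := fun _ => ℝ) y.ofLp t)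

def projE {n : ℕ} (z : EuclideanSpace ℝ (Fin (n+1))) :
    EuclideanSpace ℝ (Fin n) := WithLp.toLp 2 (fun i => z (Fin.castSucc i))

lemma snocE_last {n : ℕ} (y : EuclideanSpace ℝ (Fin n)) (t : ℝ) :
    (snocE y t) (Fin.last n) = t := by simp [snocE]

lemma projE_snocE {n : ℕ} (y : EuclideanSpace ℝ (Fin n)) (t : ℝ) :
    projE (snocE y t) = y := by
  ext l; simp [projE, snocE]

lemma inner_snocE {n : ℕ} (b : EuclideanSpace ℝ (Fin n)) (β : ℝ)
    (z : EuclideanSpace ℝ (Fin (n+1))) :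
    ⟪snocE b β, z⟫ = ⟪b, projE z⟫ + β * z (Fin.last n) := by
  simp [snocE, projE, PiLp.inner_apply, Fin.sum_univ_castSucc, mul_comm]

set_option maxHeartbeats 1000000 in

/-- Transitivity rule for cones: if `G ⪯ F ⪯ P`, `q ∈ (F*)°|P` and `p ∈ (G*)°|F`, then
`q + ε • p ∈ (G*)°|P` for all sufficiently small `ε > 0`. -/
theorem stmt14 {n : ℕ} (P F G : Set (EuclideanSpace ℝ (Fin n)))
    (hP : IsPolyhedron P) (hF : IsFace P F) (hG : IsFace F G) (hGne : G.Nonempty)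
    (q p : EuclideanSpace ℝ (Fin n))
    (hq : q ∈ coneInterior P F) (hp : p ∈ coneInterior F G) :
    ∃ ε₀ : ℝ, 0 < ε₀ ∧ ∀ ε : ℝ, 0 < ε → ε < ε₀ →
      q + ε • p ∈ coneInterior P G := by
  classical
  obtain ⟨hq0, ρq, hqF, hqP⟩ := hq
  obtain ⟨hp0, ρp, hpG, hpF⟩ := hp
  obtain ⟨u₀, hu₀G⟩ := hGne
  have hFP : F ⊆ P := hF.1
  have hGF : G ⊆ F := hG.1
  obtain ⟨N, Q, R, hPdef⟩ := hP
  have hu₀F : u₀ ∈ F := hGF hu₀G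
  have hu₀P : u₀ ∈ P := hFP hu₀F
  have hPmem : ∀ y, y ∈ P ↔ ∀ j, R j ≤ ⟪Q j, y⟫ := fun y => by rw [hPdef]; exact Iff.rfl
  have hqgeP : ∀ y ∈ P, ρq ≤ ⟪q, y⟫ := by
    intro y hy
    by_cases hyF : y ∈ F
    · exact (hqF y hyF).ge
    · exact (hqP y ⟨hy, hyF⟩).le
  have hFmem : ∀ y ∈ P, ⟪q, y⟫ = ρq → y ∈ F := by
    intro y hy hEq
    by_contra hyF
    exact absurd hEq (ne_of_gt (hqP y ⟨hy, hyF⟩))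
  have hpgeF : ∀ y ∈ F, ρp ≤ ⟪p, y⟫ := by
    intro y hy
    by_cases hyG : y ∈ G
    · exact (hpG y hyG).ge
    · exact (hpF y ⟨hy, hyG⟩).le
  -- homogenized constraint system in dimension n+1
  set a : Fin (N+1) → EuclideanSpace ℝ (Fin (n+1)) :=
    Fin.snoc (fun j => snocE (Q j) (-R j)) (snocE 0 1) with ha
  have haC : ∀ j : Fin N, a j.castSucc = snocE (Q j) (-R j) := by
    intro j; rw [ha]; exact Fin.snoc_castSucc _ _ _
  have haL : a (Fin.last N) = snocE 0 1 := by rw [ha]; exact Fin.snoc_last _ _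
  obtain ⟨M, v, hvK, hvrep⟩ := weyl (N+1) a
  set τ : Fin M → ℝ := fun i => v i (Fin.last n) with hτdef
  set π : Fin M → EuclideanSpace ℝ (Fin n) := fun i => projE (v i) with hπdef
  have hτ : ∀ i, 0 ≤ τ i := by
    intro i
    have := hvK i (Fin.last N)
    rw [haL, inner_snocE] at this
    simpa using this
  have hQπ : ∀ i j, R j * τ i ≤ ⟪Q j, π i⟫ := by
    intro i j
    have := hvK i j.castSucc
    rw [haC, inner_snocE] at this
    simp only [hτdef, hπdef]
    linarith
  set gq : Fin M → ℝ := fun i => ⟪q, π i⟫ + (-ρq) * τ i with hgqdef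
  set hp' : Fin M → ℝ := fun i => ⟪p, π i⟫ + (-ρp) * τ i with hp'def
  -- membership facts for generators
  have hrec : ∀ i, τ i = 0 → u₀ + π i ∈ P := by
    intro i h0
    rw [hPmem]
    intro j
    have h1 := hQπ i j
    rw [h0, mul_zero] at h1
    have h2 := (hPmem u₀).mp hu₀P j
    rw [inner_add_right]
    linarith
  have hscale : ∀ i, 0 < τ i → (τ i)⁻¹ • π i ∈ P := by
    intro i hpos
    rw [hPmem]
    intro j
    have h1 := hQπ i j
    rw [real_inner_smul_right]
    have h3 : τ i * (R j) ≤ τ i * ((τ i)⁻¹ * ⟪Q j, π i⟫) := by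
      have : τ i * ((τ i)⁻¹ * ⟪Q j, π i⟫) = ⟪Q j, π i⟫ := by
        field_simp
      rw [this]; linarith
    nlinarith
  have claimA : ∀ i, 0 ≤ gq i := by
    intro i
    rcases eq_or_lt_of_le (hτ i) with h0 | hpos
    · have hmem := hrec i h0.symm
      have h2 := hqgeP _ hmem
      rw [inner_add_right, hqF u₀ hu₀F] at h2
      simp only [hgqdef, ← h0, mul_zero, add_zero]
      linarith
    · have hmem := hscale i hpos
      have h2 := hqgeP _ hmem
      rw [real_inner_smul_right] at h2
      have h3 : τ i * ρq ≤ τ i * ((τ i)⁻¹ * ⟪q, π i⟫) :=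
        mul_le_mul_of_nonneg_left h2 hpos.le
      have h4 : τ i * ((τ i)⁻¹ * ⟪q, π i⟫) = ⟪q, π i⟫ := by field_simp
      simp only [hgqdef]
      nlinarith
  have claimB : ∀ i, gq i = 0 → 0 ≤ hp' i := by
    intro i hgq0
    simp only [hgqdef] at hgq0
    rcases eq_or_lt_of_le (hτ i) with h0 | hpos
    · have hmem := hrec i h0.symm
      have hqeq : ⟪q, u₀ + π i⟫ = ρq := by
        rw [inner_add_right, hqF u₀ hu₀F]
        rw [← h0, mul_zero, add_zero] at hgq0
        linarith
      have hFmem' := hFmem _ hmem hqeq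
      have h2 := hpgeF _ hFmem'
      rw [inner_add_right, hpG u₀ hu₀G] at h2
      simp only [hp'def, ← h0, mul_zero, add_zero]
      linarith
    · have hmem := hscale i hpos
      have hqeq : ⟪q, (τ i)⁻¹ • π i⟫ = ρq := by
        rw [real_inner_smul_right]
        have : ⟪q, π i⟫ = ρq * τ i := by linarith
        rw [this]
        field_simp
      have hFmem' := hFmem _ hmem hqeq
      have h2 := hpgeF _ hFmem'
      rw [real_inner_smul_right] at h2
      have h3 : τ i * ρp ≤ τ i * ((τ i)⁻¹ * ⟪p, π i⟫) :=
        mul_le_mul_of_nonneg_left h2 hpos.le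
      have h4 : τ i * ((τ i)⁻¹ * ⟪p, π i⟫) = ⟪p, π i⟫ := by field_simp
      simp only [hp'def]
      nlinarith
  -- define ε₀
  set T : Finset ℝ := insert (‖q‖^2 / (1 + |⟪p, q⟫|))
    ((Finset.univ.filter (fun i => 0 < gq i)).image (fun i => gq i / (1 + |hp' i|))) with hT
  have hTne : T.Nonempty := Finset.insert_nonempty _ _
  refine ⟨T.min' hTne, ?_, ?_⟩
  · have hmem := T.min'_mem hTne
    rcases Finset.mem_insert.mp hmem with h | h
    · rw [h]
      have hq' : ‖q‖ ≠ 0 := norm_ne_zero_iff.mpr hq0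
      positivity
    · obtain ⟨i, hi, hEq⟩ := Finset.mem_image.mp h
      have hgqi : 0 < gq i := (Finset.mem_filter.mp hi).2
      rw [← hEq]
      positivity
  intro ε hε hεlt
  have hεq : ε * (1 + |⟪p, q⟫|) < ‖q‖^2 := by
    have h1 : T.min' hTne ≤ ‖q‖^2 / (1 + |⟪p, q⟫|) :=
      T.min'_le _ (by rw [hT]; exact Finset.mem_insert_self _ _)
    have h2 : ε < ‖q‖^2 / (1 + |⟪p, q⟫|) := lt_of_lt_of_le hεlt h1
    have h3 : (0:ℝ) < 1 + |⟪p, q⟫| := by positivity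
    exact (lt_div_iff₀ h3).mp h2
  have keybound : ∀ i, 0 < gq i → 0 < gq i + ε * hp' i := by
    intro i hgqi
    have h1 : T.min' hTne ≤ gq i / (1 + |hp' i|) := by
      apply T.min'_le
      rw [hT]
      exact Finset.mem_insert_of_mem (Finset.mem_image_of_mem _
        (Finset.mem_filter.mpr ⟨Finset.mem_univ _, hgqi⟩))
    have h3 : (0:ℝ) < 1 + |hp' i| := by positivity
    have h2 : ε * (1 + |hp' i|) < gq i := (lt_div_iff₀ h3).mp (lt_of_lt_of_le hεlt h1)
    have h5 : ε * (-|hp' i|) ≤ ε * hp' i := mul_le_mul_of_nonneg_left (neg_abs_le (hp' i)) hε.le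
    have h6 : ε * (1 + |hp' i|) = ε + ε * |hp' i| := by ring
    have h7 : ε * (-|hp' i|) = -(ε * |hp' i|) := by ring
    linarith
  refine ⟨?_, ρq + ε * ρp, ?_, ?_⟩
  · -- nonzero
    intro hzero
    have h1 : ⟪q + ε • p, q⟫ = 0 := by rw [hzero]; exact inner_zero_left q
    rw [inner_add_left, real_inner_smul_left, real_inner_self_eq_norm_sq] at h1
    have h5 : ε * (-|⟪p, q⟫|) ≤ ε * ⟪p, q⟫ := mul_le_mul_of_nonneg_left (neg_abs_le _) hε.le
    have h6 : ε * (1 + |⟪p, q⟫|) = ε + ε * |⟪p, q⟫| := by ring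
    have h7 : ε * (-|⟪p, q⟫|) = -(ε * |⟪p, q⟫|) := by ring
    linarith
  · -- equal on G
    intro u huG
    rw [inner_add_left, real_inner_smul_left, hqF u (hGF huG), hpG u huG]
  · -- strict on P \ G
    rintro y ⟨hyP, hyG⟩
    rw [inner_add_left, real_inner_smul_left]
    by_cases hyF : y ∈ F
    · have h1 := hpF y ⟨hyF, hyG⟩
      rw [hqF y hyF]
      have h2 := mul_lt_mul_of_pos_left h1 hε
      linarith
    · -- y ∈ P \ F : use the conic representation
      set z : EuclideanSpace ℝ (Fin (n+1)) := snocE y 1 with hz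
      have hzK : ∀ j : Fin (N+1), 0 ≤ ⟪a j, z⟫ := by
        intro j
        induction j using Fin.lastCases with
        | last =>
          rw [haL, inner_snocE, hz, snocE_last]
          simp
        | cast j' =>
          rw [haC, inner_snocE, hz, snocE_last, projE_snocE]
          have := (hPmem y).mp hyP j'
          linarith
      obtain ⟨c, hc, hczrep⟩ := hvrep z hzK
      have hsum : ∀ (w : EuclideanSpace ℝ (Fin n)) (σ : ℝ),
          ⟪w, y⟫ + σ = ∑ i, c i * (⟪w, π i⟫ + σ * τ i) := by
        intro w σ
        have h1 : ⟪snocE w σ, z⟫ = ⟪w, y⟫ + σ := by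
          rw [hz, inner_snocE, projE_snocE, snocE_last, mul_one]
        have h2 : ⟪snocE w σ, z⟫ = ∑ i, c i * ⟪snocE w σ, v i⟫ := by
          rw [hczrep, inner_sum]
          exact Finset.sum_congr rfl fun l _ => real_inner_smul_right _ _ _
        rw [← h1, h2]
        refine Finset.sum_congr rfl fun l _ => ?_
        rw [inner_snocE]
      have hA : ⟪q, y⟫ + (-ρq) = ∑ i, c i * gq i := hsum q (-ρq)
      have hB : ⟪p, y⟫ + (-ρp) = ∑ i, c i * hp' i := hsum p (-ρp)
      have hgy : 0 < ⟪q, y⟫ + (-ρq) := by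
        have := hqP y ⟨hyP, hyF⟩; linarith
      have hterm : ∀ i, 0 ≤ c i * (gq i + ε * hp' i) := by
        intro i
        rcases eq_or_lt_of_le (claimA i) with h0 | hpos
        · have hB0 := claimB i h0.symm
          apply mul_nonneg (hc i)
          rw [← h0, zero_add]
          exact mul_nonneg hε.le hB0
        · exact mul_nonneg (hc i) (keybound i hpos).le
      have hex : ∃ i, 0 < c i * gq i := by
        by_contra hno
        push_neg at hno
        have hall : ∀ i ∈ Finset.univ, c i * gq i = 0 := fun i _ =>
          le_antisymm (hno i) (mul_nonneg (hc i) (claimA i))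
        rw [hA] at hgy
        rw [Finset.sum_congr rfl hall] at hgy
        simp at hgy
      obtain ⟨i₀, hi₀⟩ := hex
      have hc₀ : 0 < c i₀ := by
        rcases (lt_or_eq_of_le (hc i₀)) with h | h
        · exact h
        · rw [← h] at hi₀; simp at hi₀
      have hgq₀ : 0 < gq i₀ := by
        by_contra h
        push_neg at h
        nlinarith
      have hpos : 0 < ∑ i, c i * (gq i + ε * hp' i) := by
        apply Finset.sum_pos' (fun i _ => hterm i)
        exact ⟨i₀, Finset.mem_univ _, mul_pos hc₀ (keybound i₀ hgq₀)⟩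
      have hsplit : ∑ i, c i * (gq i + ε * hp' i) =
          (∑ i, c i * gq i) + ε * ∑ i, c i * hp' i := by
        rw [Finset.mul_sum, ← Finset.sum_add_distrib]
        exact Finset.sum_congr rfl fun i _ => by ring
      rw [hsplit, ← hA, ← hB] at hpos
      have hexp : ε * (⟪p, y⟫ + -ρp) = ε * ⟪p, y⟫ - ε * ρp := by ring
      linarith
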